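/- Let E be a finite-dimensional real inner product space and f : E → ℝ differentiable with ∇f L-Lipschitz. Let (Ω, 𝓕, P) be a probability space with a sub-σ-algebra 𝓖, let θ : Ω → E be 𝓖-measurable and square-integrable with ∇f(θ) square-integrable, let g : Ω → E be square-integrable with E[g | 𝓖] = ∇f(θ) almost surely, let η ≥ 0, and set θ' = θ − η·g. Then E[f(θ')] ≤ E[f(θ)] − η·E[‖∇f(θ)‖²] + (L·η²/2)·E[‖g‖²]. -/

import Mathlib

open MeasureTheory
open scoped RealInnerProductSpace

section Analysis
variable {E : Type*} [NormedAddCommGroup E] [InnerProductSpace ℝ E] [FiniteDimensional ℝ E]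

lemma sgd_aux_ftc (f : E → ℝ) (hf : Differentiable ℝ f)
    (hg_cont : Continuous (gradient f)) (x v : E) :
    f (x + v) - f x = ∫ t in (0:ℝ)..1, ⟪gradient f (x + t • v), v⟫ := by
  have hderiv : ∀ t : ℝ, HasDerivAt (fun s : ℝ => f (x + s • v))
      ⟪gradient f (x + t • v), v⟫ t := by
    intro t
    have hline : HasDerivAt (fun s : ℝ => x + s • v) v t := by
      simpa using ((hasDerivAt_id t).smul_const v).const_add x
    have hfd := (hf (x + t • v)).hasGradientAt.hasFDerivAt
    have := hfd.comp_hasDerivAt t hline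
    exact this.congr_deriv (by simp [InnerProductSpace.toDual])
  have hcont : Continuous fun t : ℝ => ⟪gradient f (x + t • v), v⟫ := by
    exact (hg_cont.comp (by continuity)).inner continuous_const
  have := intervalIntegral.integral_eq_sub_of_hasDerivAt
    (f := fun s : ℝ => f (x + s • v)) (a := 0) (b := 1)
    (fun t _ => hderiv t) (hcont.intervalIntegrable 0 1)
  simpa using this.symm

lemma sgd_aux_descent (f : E → ℝ) (L : ℝ) (hf : Differentiable ℝ f)
    (hlip : ∀ x y : E, ‖gradient f x - gradient f y‖ ≤ L * ‖x - y‖)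
    (hg_cont : Continuous (gradient f)) (x v : E) :
    f (x + v) ≤ f x + ⟪gradient f x, v⟫ + L / 2 * ‖v‖ ^ 2 := by
  have hftc := sgd_aux_ftc f hf hg_cont x v
  have hsplit : f (x + v) - f x - ⟪gradient f x, v⟫
      = ∫ t in (0:ℝ)..1, ⟪gradient f (x + t • v) - gradient f x, v⟫ := by
    rw [hftc]
    have : ∀ t : ℝ, ⟪gradient f (x + t • v) - gradient f x, v⟫
        = ⟪gradient f (x + t • v), v⟫ - ⟪gradient f x, v⟫ := fun t => inner_sub_left _ _ _
    simp only [this]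
    rw [intervalIntegral.integral_sub
      (((hg_cont.comp (by continuity)).inner continuous_const).intervalIntegrable 0 1)
      (intervalIntegrable_const)]
    simp
  have hmono : (∫ t in (0:ℝ)..1, ⟪gradient f (x + t • v) - gradient f x, v⟫)
      ≤ ∫ t in (0:ℝ)..1, L * t * ‖v‖ ^ 2 := by
    apply intervalIntegral.integral_mono_on (by norm_num)
    · exact (((hg_cont.comp (by continuity)).sub continuous_const).inner
        continuous_const).intervalIntegrable 0 1
    · exact (continuous_const.mul continuous_id |>.mul continuous_const).intervalIntegrable 0 1
    · intro t ht
      obtain ⟨ht0, ht1⟩ := ht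
      calc ⟪gradient f (x + t • v) - gradient f x, v⟫
          ≤ ‖gradient f (x + t • v) - gradient f x‖ * ‖v‖ := real_inner_le_norm _ _
        _ ≤ (L * ‖(x + t • v) - x‖) * ‖v‖ :=
            mul_le_mul_of_nonneg_right (hlip _ _) (norm_nonneg v)
        _ = L * t * ‖v‖ ^ 2 := by
            rw [add_sub_cancel_left, norm_smul, Real.norm_eq_abs, abs_of_nonneg ht0]
            ring
  have hval : (∫ t in (0:ℝ)..1, L * t * ‖v‖ ^ 2) = L / 2 * ‖v‖ ^ 2 := by
    simp only [mul_comm, mul_assoc]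
    rw [intervalIntegral.integral_const_mul]
    rw [show (fun x : ℝ => x * ‖v‖ ^ 2) = fun x : ℝ => ‖v‖ ^ 2 * x by funext x; ring]
    rw [intervalIntegral.integral_const_mul, integral_id]
    ring
  nlinarith [hsplit ▸ (hmono.trans_eq hval)]

lemma sgd_aux_growth (f : E → ℝ) (L : ℝ) (hf : Differentiable ℝ f)
    (hlip : ∀ x y : E, ‖gradient f x - gradient f y‖ ≤ L * ‖x - y‖)
    (hg_cont : Continuous (gradient f)) (z : E) :
    |f z| ≤ |f 0| + ‖gradient f 0‖ * ‖z‖ + |L| / 2 * ‖z‖ ^ 2 := by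
  have hftc := sgd_aux_ftc f hf hg_cont 0 z
  have hbound : |f z - f 0| ≤ ‖gradient f 0‖ * ‖z‖ + |L| / 2 * ‖z‖ ^ 2 := by
    have h1 : f z - f 0 = ∫ t in (0:ℝ)..1, ⟪gradient f ((0:E) + t • z), z⟫ := by
      simpa using hftc
    rw [h1]
    have h2 : |∫ t in (0:ℝ)..1, ⟪gradient f ((0:E) + t • z), z⟫|
        ≤ ∫ t in (0:ℝ)..1, |⟪gradient f ((0:E) + t • z), z⟫| :=
      intervalIntegral.abs_integral_le_integral_abs (by norm_num)
    refine h2.trans ?_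
    have h3 : (∫ t in (0:ℝ)..1, |⟪gradient f ((0:E) + t • z), z⟫|)
        ≤ ∫ t in (0:ℝ)..1, (‖gradient f 0‖ + |L| * t * ‖z‖) * ‖z‖ := by
      apply intervalIntegral.integral_mono_on (by norm_num)
      · exact (((hg_cont.comp (by continuity)).inner continuous_const).abs).intervalIntegrable 0 1
      · exact ((continuous_const.add ((continuous_const.mul continuous_id).mul
          continuous_const)).mul continuous_const).intervalIntegrable 0 1
      · intro t ht
        obtain ⟨ht0, _⟩ := ht
        calc |⟪gradient f ((0:E) + t • z), z⟫|
            ≤ ‖gradient f ((0:E) + t • z)‖ * ‖z‖ := abs_real_inner_le_norm _ _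
          _ ≤ (‖gradient f 0‖ + |L| * t * ‖z‖) * ‖z‖ := by
              apply mul_le_mul_of_nonneg_right _ (norm_nonneg z)
              have h4 : ‖gradient f ((0:E) + t • z) - gradient f 0‖ ≤ L * ‖t • z‖ := by
                simpa using hlip ((0:E) + t • z) 0
              have h5 : ‖gradient f ((0:E) + t • z)‖
                  ≤ ‖gradient f 0‖ + L * ‖t • z‖ := by
                have := norm_sub_norm_le (gradient f ((0:E) + t • z)) (gradient f 0)
                linarith [this.trans h4]
              refine h5.trans ?_
              have : L * ‖t • z‖ ≤ |L| * t * ‖z‖ := by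
                rw [norm_smul, Real.norm_eq_abs, abs_of_nonneg ht0, ← mul_assoc]
                exact mul_le_mul_of_nonneg_right
                  (mul_le_mul_of_nonneg_right (le_abs_self L) ht0) (norm_nonneg z)
              linarith
    refine h3.trans_eq ?_
    have : (∫ t in (0:ℝ)..1, (‖gradient f 0‖ + |L| * t * ‖z‖) * ‖z‖)
        = (∫ t in (0:ℝ)..1, (‖gradient f 0‖ * ‖z‖ + (|L| * ‖z‖ ^ 2) * t)) := by
      congr 1; funext t; ring
    rw [this, intervalIntegral.integral_add intervalIntegrable_const
      (Continuous.intervalIntegrable (by continuity) 0 1)]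
    have h6 : (∫ t in (0:ℝ)..1, |L| * ‖z‖ ^ 2 * t) = |L| * ‖z‖ ^ 2 * (1/2) := by
      rw [intervalIntegral.integral_const_mul, integral_id]; norm_num
    simp [h6]
    ring
  have := abs_sub_abs_le_abs_sub (f z) (f 0)
  linarith [abs_nonneg (f z - f 0)]

end Analysis

section Prob
variable {E : Type*} [NormedAddCommGroup E] [InnerProductSpace ℝ E] [FiniteDimensional ℝ E]
variable {Ω : Type*} {𝓖 : MeasurableSpace Ω} {mΩ : MeasurableSpace Ω} {μ : Measure Ω}
variable [IsProbabilityMeasure μ]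

lemma sgd_aux_mul_int {u v : Ω → ℝ} (hu : MemLp u 2 μ) (hv : MemLp v 2 μ) :
    Integrable (fun ω => u ω * v ω) μ := by
  refine Integrable.mono' ((hu.integrable_sq.add hv.integrable_sq).div_const 2)
    (hu.1.mul hv.1) (ae_of_all _ fun ω => ?_)
  simp only [Pi.add_apply, Real.norm_eq_abs]
  refine abs_le.mpr ⟨by nlinarith [sq_nonneg (u ω + v ω)], by nlinarith [sq_nonneg (u ω - v ω)]⟩

lemma sgd_aux_inner_int {X g : Ω → E} (hX : MemLp X 2 μ) (hg : MemLp g 2 μ) :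
    Integrable (fun ω => ⟪X ω, g ω⟫) μ := by
  refine Integrable.mono' (((hX.norm.integrable_sq).add (hg.norm.integrable_sq)).div_const 2)
    (hX.1.inner hg.1) (ae_of_all _ fun ω => ?_)
  have h1 : ‖⟪X ω, g ω⟫‖ ≤ ‖X ω‖ * ‖g ω‖ := norm_inner_le_norm _ _
  simp only [Pi.add_apply]
  nlinarith [sq_nonneg (‖X ω‖ - ‖g ω‖), norm_nonneg (X ω), norm_nonneg (g ω)]

lemma sgd_aux_condexp_inner_const (h𝓖 : 𝓖 ≤ mΩ) {g X : Ω → E}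
    (hg : Integrable g μ) (hX_meas : StronglyMeasurable[𝓖] X) (hX : Integrable X μ)
    (hcond : μ[g|𝓖] =ᵐ[μ] X) (c : E) :
    μ[(fun ω => ⟪g ω, c⟫)|𝓖] =ᵐ[μ] fun ω => ⟪X ω, c⟫ := by
  haveI : IsFiniteMeasure (μ.trim h𝓖) := isFiniteMeasure_trim h𝓖
  symm
  refine ae_eq_condExp_of_forall_setIntegral_eq h𝓖 (hg.inner_const c)
    (fun s _ _ => (hX.inner_const c).integrableOn) (fun s hs hμs => ?_)
    ((hX_meas.inner (stronglyMeasurable_const :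
      StronglyMeasurable[𝓖] fun _ : Ω => c)).aestronglyMeasurable)
  have h1 : ∫ ω in s, ⟪X ω, c⟫ ∂μ = ⟪∫ ω in s, X ω ∂μ, c⟫ := by
    rw [real_inner_comm c (∫ ω in s, X ω ∂μ), ← integral_inner hX.integrableOn c]
    exact integral_congr_ae (ae_of_all _ fun ω => real_inner_comm _ _)
  have h2 : ∫ ω in s, ⟪g ω, c⟫ ∂μ = ⟪∫ ω in s, g ω ∂μ, c⟫ := by
    rw [real_inner_comm c (∫ ω in s, g ω ∂μ), ← integral_inner hg.integrableOn c]
    exact integral_congr_ae (ae_of_all _ fun ω => real_inner_comm _ _)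
  rw [h1, h2]
  congr 1
  calc ∫ ω in s, X ω ∂μ = ∫ ω in s, (μ[g|𝓖]) ω ∂μ :=
        setIntegral_congr_ae (h𝓖 s hs) (hcond.symm.mono fun ω h _ => h)
    _ = ∫ ω in s, g ω ∂μ := setIntegral_condExp h𝓖 hg hs

lemma sgd_aux_integral_inner (h𝓖 : 𝓖 ≤ mΩ) {X g : Ω → E}
    (hX_meas : StronglyMeasurable[𝓖] X) (hX : MemLp X 2 μ) (hg : MemLp g 2 μ)
    (hcond : μ[g|𝓖] =ᵐ[μ] X) :
    ∫ ω, ⟪X ω, g ω⟫ ∂μ = ∫ ω, ‖X ω‖ ^ 2 ∂μ := by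
  haveI : IsFiniteMeasure (μ.trim h𝓖) := isFiniteMeasure_trim h𝓖
  set b := stdOrthonormalBasis ℝ E with hb
  have hXi2 : ∀ c : E, MemLp (fun ω => ⟪X ω, c⟫) 2 μ := fun c => hX.inner_const c
  have hgi2 : ∀ c : E, MemLp (fun ω => ⟪g ω, c⟫) 2 μ := fun c => hg.inner_const c
  have hsum1 : ∀ ω, ⟪X ω, g ω⟫ = ∑ i, ⟪X ω, b i⟫ * ⟪g ω, b i⟫ := by
    intro ω
    rw [← b.sum_inner_mul_inner (X ω) (g ω)]
    exact Finset.sum_congr rfl fun i _ => by rw [real_inner_comm (b i) (g ω)]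
  have hsum2 : ∀ ω, ‖X ω‖ ^ 2 = ∑ i, ⟪X ω, b i⟫ * ⟪X ω, b i⟫ := by
    intro ω
    rw [← real_inner_self_eq_norm_sq, ← b.sum_inner_mul_inner (X ω) (X ω)]
    exact Finset.sum_congr rfl fun i _ => by rw [real_inner_comm (b i) (X ω)]
  simp_rw [hsum1, hsum2]
  rw [integral_finset_sum _ (fun i _ => sgd_aux_mul_int (hXi2 (b i)) (hgi2 (b i))),
    integral_finset_sum _ (fun i _ => sgd_aux_mul_int (hXi2 (b i)) (hXi2 (b i)))]
  refine Finset.sum_congr rfl fun i _ => ?_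
  have hXi_meas : StronglyMeasurable[𝓖] fun ω => ⟪X ω, b i⟫ :=
    hX_meas.inner stronglyMeasurable_const
  have hprod_int : Integrable (fun ω => ⟪X ω, b i⟫ * ⟪g ω, b i⟫) μ :=
    sgd_aux_mul_int (hXi2 (b i)) (hgi2 (b i))
  have hgi_int : Integrable (fun ω => ⟪g ω, b i⟫) μ := (hgi2 (b i)).integrable one_le_two
  have h1 := condExp_mul_of_stronglyMeasurable_left (m := 𝓖) hXi_meas hprod_int hgi_int
  have h2 := sgd_aux_condexp_inner_const h𝓖 (hg.integrable one_le_two) hX_meas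
    (hX.integrable one_le_two) hcond (b i)
  calc ∫ ω, ⟪X ω, b i⟫ * ⟪g ω, b i⟫ ∂μ
      = ∫ ω, (μ[(fun ω => ⟪X ω, b i⟫) * (fun ω => ⟪g ω, b i⟫)|𝓖]) ω ∂μ :=
        (integral_condExp h𝓖).symm
    _ = ∫ ω, ⟪X ω, b i⟫ * ⟪X ω, b i⟫ ∂μ := by
        refine integral_congr_ae ?_
        filter_upwards [h1, h2] with ω hω1 hω2
        simpa [hω2] using hω1

end Prob

/-- One-step expected descent for a stochastic gradient step
`θ' = θ − η g` with conditionally unbiased `g` (i.e. `E[g|𝓖] = ∇f(θ)` a.s.):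
`E[f θ'] ≤ E[f θ] − η E[‖∇f θ‖²] + (L η²/2) E[‖g‖²]`. -/
theorem sgd_one_step_expected_descent
    {E : Type*} [NormedAddCommGroup E] [InnerProductSpace ℝ E]
    [FiniteDimensional ℝ E]
    (f : E → ℝ) (L : ℝ)
    (hf : Differentiable ℝ f)
    (hlip : ∀ x y : E, ‖gradient f x - gradient f y‖ ≤ L * ‖x - y‖)
    {Ω : Type*} {mΩ : MeasurableSpace Ω} (μ : Measure Ω) [IsProbabilityMeasure μ]
    (𝓖 : MeasurableSpace Ω) (h𝓖 : 𝓖 ≤ mΩ)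
    (θ g : Ω → E)
    (hθ_meas : StronglyMeasurable[𝓖] θ)
    (hθ_int : MemLp θ 2 μ)
    (hgrad_int : MemLp (fun ω => gradient f (θ ω)) 2 μ)
    (hg_int : MemLp g 2 μ)
    (hcond : μ[g | 𝓖] =ᵐ[μ] fun ω => gradient f (θ ω))
    (η : ℝ) (hη : 0 ≤ η)
    (θ' : Ω → E) (hθ' : ∀ ω, θ' ω = θ ω - η • g ω) :
    (∫ ω, f (θ' ω) ∂μ) ≤
      (∫ ω, f (θ ω) ∂μ) - η * (∫ ω, ‖gradient f (θ ω)‖ ^ 2 ∂μ)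
        + (L * η ^ 2 / 2) * (∫ ω, ‖g ω‖ ^ 2 ∂μ) := by
  have hg_cont : Continuous (gradient f) := by
    refine LipschitzWith.continuous (K := Real.toNNReal L) ?_
    rw [lipschitzWith_iff_norm_sub_le]
    intro x y
    refine (hlip x y).trans (mul_le_mul_of_nonneg_right ?_ (norm_nonneg _))
    exact Real.le_coe_toNNReal L
  have hX_meas : StronglyMeasurable[𝓖] fun ω => gradient f (θ ω) :=
    hg_cont.comp_stronglyMeasurable hθ_meas
  -- pointwise inequality
  have hpt : ∀ ω, f (θ' ω) ≤ f (θ ω) - η * ⟪gradient f (θ ω), g ω⟫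
      + L * η ^ 2 / 2 * ‖g ω‖ ^ 2 := by
    intro ω
    have hdesc := sgd_aux_descent f L hf hlip hg_cont (θ ω) (-(η • g ω))
    have h1 : θ ω + -(η • g ω) = θ' ω := by rw [hθ' ω]; abel
    rw [h1] at hdesc
    have h2 : ⟪gradient f (θ ω), -(η • g ω)⟫ = -(η * ⟪gradient f (θ ω), g ω⟫) := by
      rw [inner_neg_right, real_inner_smul_right]
    have h3 : ‖-(η • g ω)‖ ^ 2 = η ^ 2 * ‖g ω‖ ^ 2 := by
      rw [norm_neg, norm_smul, Real.norm_eq_abs, abs_of_nonneg hη, mul_pow]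
    rw [h2, h3] at hdesc
    nlinarith [hdesc]
  -- integrability
  have hcomp_int : ∀ Z : Ω → E, MemLp Z 2 μ → Integrable (fun ω => f (Z ω)) μ := by
    intro Z hZ
    refine Integrable.mono'
      (((integrable_const |f 0|).add ((hZ.integrable one_le_two).norm.const_mul
        ‖gradient f 0‖)).add ((hZ.norm.integrable_sq).const_mul (|L| / 2)))
      (hf.continuous.comp_aestronglyMeasurable hZ.1) (ae_of_all _ fun ω => ?_)
    simp only [Pi.add_apply, Real.norm_eq_abs]
    exact sgd_aux_growth f L hf hlip hg_cont (Z ω)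
  have hθ'2 : MemLp θ' 2 μ := by
    have : (fun ω => θ ω - η • g ω) = θ' := by funext ω; rw [hθ' ω]
    rw [← this]
    exact hθ_int.sub (hg_int.const_smul η)
  have hfθ'_int := hcomp_int θ' hθ'2
  have hfθ_int := hcomp_int θ hθ_int
  have hinner_int : Integrable (fun ω => ⟪gradient f (θ ω), g ω⟫) μ :=
    sgd_aux_inner_int hgrad_int hg_int
  have hgsq_int : Integrable (fun ω => ‖g ω‖ ^ 2) μ := hg_int.norm.integrable_sq
  have key : ∫ ω, ⟪gradient f (θ ω), g ω⟫ ∂μ = ∫ ω, ‖gradient f (θ ω)‖ ^ 2 ∂μ :=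
    sgd_aux_integral_inner h𝓖 hX_meas hgrad_int hg_int hcond
  have hRHS_int : Integrable (fun ω => f (θ ω) - η * ⟪gradient f (θ ω), g ω⟫
      + L * η ^ 2 / 2 * ‖g ω‖ ^ 2) μ :=
    (hfθ_int.sub (hinner_int.const_mul η)).add (hgsq_int.const_mul (L * η ^ 2 / 2))
  calc (∫ ω, f (θ' ω) ∂μ)
      ≤ ∫ ω, (f (θ ω) - η * ⟪gradient f (θ ω), g ω⟫
          + L * η ^ 2 / 2 * ‖g ω‖ ^ 2) ∂μ :=
        integral_mono hfθ'_int hRHS_int hpt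
    _ = (∫ ω, f (θ ω) ∂μ) - η * (∫ ω, ⟪gradient f (θ ω), g ω⟫ ∂μ)
          + L * η ^ 2 / 2 * (∫ ω, ‖g ω‖ ^ 2 ∂μ) := by
        have e1 := integral_add (μ := μ) (hfθ_int.sub (hinner_int.const_mul η))
          (hgsq_int.const_mul (L * η ^ 2 / 2))
        have e2 := integral_sub (μ := μ) hfθ_int (hinner_int.const_mul η)
        simp only [Pi.add_apply, Pi.sub_apply] at e1 e2
        rw [e1, e2, integral_const_mul, integral_const_mul]
    _ = (∫ ω, f (θ ω) ∂μ) - η * (∫ ω, ‖gradient f (θ ω)‖ ^ 2 ∂μ)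
          + (L * η ^ 2 / 2) * (∫ ω, ‖g ω‖ ^ 2 ∂μ) := by rw [key]
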